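/- Let A be a DFA over {a,b} with at most k = n+m states consistent with the sets P and N of the Gold-style reduction (in particular accepting ε and a^k, rejecting a^i for 0<i<k, and rejecting every word a^i b a^{k-r} with 0≤i≤m-1, 0≤r<k, and (r<m or x_{r-m} ∉ C_i)). Then for every clause index i with 0 ≤ i ≤ m-1, the state δ(s_i, b) equals s_{m+j} for some variable index j with x_j ∈ C_i, where s_t = δ(s_0, a^t). -/
import Mathlib


/-- Letter `a` is `false`, letter `b` is `true`. For a DFA with at most `k = n + m` states
consistent with the Gold-style sample (accepting `ε` and `a^k`, rejecting `a^i` for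
`0 < i < k`, and rejecting every `a^i b a^{k-r}` with `i < m`, `r < k` and
(`r < m` or `x_{r-m} ∉ C i`)), the `b`-transition out of each clause state `s_i` leads to
a variable state `s_{m+j}` with `x_j ∈ C i`. -/
theorem dfa_b_transition_hits_clause_variable {σ : Type} [Fintype σ]
    (n m : ℕ) (hn : 1 ≤ n) (hm : 1 ≤ m)
    (C : Fin m → Finset (Fin n))
    (A : DFA Bool σ) (hcard : Fintype.card σ ≤ n + m)
    (hε : [] ∈ A.accepts)
    (hak : List.replicate (n + m) false ∈ A.accepts)
    (hrej : ∀ i, 0 < i → i < n + m → List.replicate i false ∉ A.accepts)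
    (hrej2 : ∀ i : Fin m, ∀ r : ℕ, r < n + m →
      (r < m ∨ ∀ j : Fin n, m + (j : ℕ) = r → j ∉ C i) →
      List.replicate (i : ℕ) false ++ [true] ++ List.replicate (n + m - r) false
        ∉ A.accepts) :
    ∀ i : Fin m, ∃ j ∈ C i,
      A.step (A.eval (List.replicate (i : ℕ) false)) true =
        A.eval (List.replicate (m + (j : ℕ)) false) := by
  set k := n + m with hk
  -- evaluation of concatenated replicates
  have heval : ∀ p t : ℕ, A.eval (List.replicate (p + t) false) =
      A.evalFrom (A.eval (List.replicate p false)) (List.replicate t false) := by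
    intro p t
    rw [List.replicate_add]
    exact A.evalFrom_of_append _ _ _
  -- the map t ↦ eval (a^t) on Fin k
  set f : Fin k → σ := fun t => A.eval (List.replicate (t : ℕ) false) with hf
  have hinj : Function.Injective f := by
    have key : ∀ p q : ℕ, p < q → q < k →
        A.eval (List.replicate p false) ≠ A.eval (List.replicate q false) := by
      intro p q hpq hq heq
      apply hrej (p + (k - q)) (by omega) (by omega)
      have h1 : A.eval (List.replicate (p + (k - q)) false)
          = A.eval (List.replicate (q + (k - q)) false) := by
        rw [heval, heval, heq]
      have h2 : q + (k - q) = k := by omega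
      rw [DFA.mem_accepts, h1, h2]
      exact hak
    intro p q hpq
    rcases lt_trichotomy (p : ℕ) (q : ℕ) with h | h | h
    · exact absurd hpq (key p q h q.isLt)
    · exact Fin.ext h
    · exact absurd hpq.symm (key q p h p.isLt)
  have hbij : Function.Bijective f := by
    rw [Fintype.bijective_iff_injective_and_card]
    refine ⟨hinj, le_antisymm ?_ ?_⟩
    · simpa [hk] using Fintype.card_le_of_injective f hinj
    · simpa [hk] using hcard
  intro i
  obtain ⟨r, hr⟩ := hbij.surjective (A.step (A.eval (List.replicate (i : ℕ) false)) true)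
  -- the word a^i b a^{k-r} is accepted
  have hacc : List.replicate (i : ℕ) false ++ [true] ++ List.replicate (k - (r : ℕ)) false
      ∈ A.accepts := by
    rw [DFA.mem_accepts, DFA.eval, A.evalFrom_of_append]
    have h1 : A.evalFrom A.start (List.replicate (i : ℕ) false ++ [true])
        = f r := by
      rw [A.evalFrom_of_append]
      exact hr.symm
    rw [h1, hf]
    have h2 : A.evalFrom (A.eval (List.replicate (r : ℕ) false))
        (List.replicate (k - (r : ℕ)) false)
        = A.eval (List.replicate ((r : ℕ) + (k - (r : ℕ))) false) := (heval _ _).symm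
    have h3 : (r : ℕ) + (k - (r : ℕ)) = k := by omega
    rw [h2, h3]
    exact hak
  by_cases hcase : ((r : ℕ) < m ∨ ∀ j : Fin n, m + (j : ℕ) = (r : ℕ) → j ∉ C i)
  · exact absurd hacc (hrej2 i r r.isLt hcase)
  · push_neg at hcase
    obtain ⟨_, j, hj, hjC⟩ := hcase
    refine ⟨j, hjC, ?_⟩
    rw [← hr, hf]
    simp only [hj]
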